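/- Let k ≥ 1 and let T be an invertible measure-preserving transformation of a probability space (X,μ). Suppose X is partitioned (up to null sets) into k Rokhlin towers: X = ⨆_{j=1}^k ⨆_{i=0}^{h_j−1} T^i B_j with the sets T^i B_j (0 ≤ i < h_j, 1 ≤ j ≤ k) pairwise disjoint, so that T^{h_j} B_j ⊆ ⨆_{l=1}^k B_l for each j. Then there exist an index j₀ with μ(B_{j₀}) = max_j μ(B_j), an index j* ∈ {1,…,k}, and a positive integer m that is a sum of at most k of the heights h_{j_1},…,h_{j_b} (with b ≤ k), such that μ(T^m B_{j*} ∩ B_{j*}) ≥ μ(B_{j₀}) / k^k. -/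

import Mathlib

open MeasureTheory Filter Topology
open scoped ENNReal

/-- The pigeonhole step in the proof that exact finite-rank transformations are
partially rigid: a return time `m` which is a sum of at most `k` tower heights with
`μ(T^m B ∩ B) ≥ μ(B_{j₀})/k^k` for some tower base `B`. -/
theorem stmt3 {X : Type*} [MeasurableSpace X] (μ : Measure X) [IsProbabilityMeasure μ]
    (T : ℤ → X → X) (hmp : ∀ g, MeasurePreserving (T g) μ μ)
    (hadd : ∀ g h x, T (g + h) x = T g (T h x)) (hzero : ∀ x, T 0 x = x)
    (k : ℕ) (hk : 1 ≤ k)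
    (B : Fin k → Set X) (hBmeas : ∀ j, MeasurableSet (B j))
    (hgt : Fin k → ℕ) (hpos : ∀ j, 0 < hgt j)
    (hdisj : ∀ (j j' : Fin k) (i i' : ℕ), i < hgt j → i' < hgt j' →
      (j, i) ≠ (j', i') → μ (T (i:ℤ) '' B j ∩ T (i':ℤ) '' B j') = 0)
    (hfill : μ (Set.univ \ ⋃ j, ⋃ i ∈ Finset.range (hgt j), T (i:ℤ) '' B j) = 0)
    (hret : ∀ j, μ ((T (hgt j : ℤ) '' B j) \ ⋃ l, B l) = 0) :
    ∃ j₀ : Fin k, (∀ j, μ (B j) ≤ μ (B j₀)) ∧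
      ∃ (jstar : Fin k) (m : ℕ), 0 < m ∧
        (∃ (b : ℕ), b ≤ k ∧ ∃ c : Fin b → Fin k, m = ∑ i, hgt (c i)) ∧
        μ (B j₀) / (k : ℝ≥0∞) ^ k ≤ μ (T (m:ℤ) '' B jstar ∩ B jstar) := by
  classical
  haveI : Nonempty (Fin k) := ⟨⟨0, hk⟩⟩
  -- basic facts about the ℤ-action T
  have hcomp : ∀ (g h : ℤ) (S : Set X), T g '' (T h '' S) = T (g + h) '' S := by
    intro g h S
    have hfun : T g ∘ T h = T (g + h) := funext fun x => (hadd g h x).symm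
    rw [← Set.image_comp, hfun]
  have hid : ∀ S : Set X, T (0:ℤ) '' S = S := by
    intro S
    have : T (0:ℤ) = id := funext hzero
    rw [this, Set.image_id]
  have himg : ∀ (g : ℤ) (S : Set X), T g '' S = T (-g) ⁻¹' S := by
    intro g S
    ext x
    constructor
    · rintro ⟨y, hy, rfl⟩
      have : T (-g) (T g y) = y := by rw [← hadd]; simp [hzero]
      simpa [Set.mem_preimage, this] using hy
    · intro hx
      exact ⟨T (-g) x, hx, by rw [← hadd]; simp [hzero]⟩
  have himgmeas : ∀ (g : ℤ) (S : Set X), MeasurableSet S → MeasurableSet (T g '' S) := by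
    intro g S hS
    rw [himg]
    exact (hmp (-g)).measurable hS
  have himgmeasure : ∀ (g : ℤ) (S : Set X), MeasurableSet S → μ (T g '' S) = μ S := by
    intro g S hS
    rw [himg]
    exact (hmp (-g)).measure_preimage hS.nullMeasurableSet
  -- the key step: pushing a subset of a base up its tower lands in some base
  -- with at most a factor k loss of measure
  have key : ∀ (j : Fin k) (A : Set X), MeasurableSet A → A ⊆ B j →
      ∃ l : Fin k, μ A ≤ k * μ (T (hgt j : ℤ) '' A ∩ B l) := by
    intro j A hAm hAB
    set S := T (hgt j : ℤ) '' A with hSdef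
    have hSnull : μ (S \ ⋃ l, B l) = 0 :=
      measure_mono_null (Set.diff_subset_diff_left (Set.image_mono hAB)) (hret j)
    have hSA : μ S = μ A := himgmeasure _ _ hAm
    obtain ⟨l, hl⟩ := Finite.exists_max (fun l : Fin k => μ (S ∩ B l))
    refine ⟨l, ?_⟩
    have h1 : μ A ≤ μ (S ∩ ⋃ l', B l') := by
      calc μ A = μ S := hSA.symm
        _ ≤ μ (S ∩ ⋃ l', B l') + μ (S \ ⋃ l', B l') := measure_le_inter_add_diff μ S _
        _ = μ (S ∩ ⋃ l', B l') := by rw [hSnull, add_zero]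
    have h2 : μ (S ∩ ⋃ l', B l') ≤ ∑ l' : Fin k, μ (S ∩ B l') := by
      rw [Set.inter_iUnion]
      exact measure_iUnion_fintype_le μ _
    have h3 : ∑ l' : Fin k, μ (S ∩ B l') ≤ (k : ℝ≥0∞) * μ (S ∩ B l) := by
      calc ∑ l' : Fin k, μ (S ∩ B l') ≤ ∑ _l' : Fin k, μ (S ∩ B l) :=
            Finset.sum_le_sum fun i _ => hl i
        _ = (k : ℝ≥0∞) * μ (S ∩ B l) := by
            simp [Finset.sum_const, Finset.card_univ, nsmul_eq_mul]
    exact h1.trans (h2.trans h3)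
  -- the maximal base
  obtain ⟨j₀, hj₀⟩ := Finite.exists_max (fun j : Fin k => μ (B j))
  -- build the chain of sets by iteration
  let P := {p : Fin k × Set X // MeasurableSet p.2 ∧ p.2 ⊆ B p.1}
  let F : P → P := fun p =>
    ⟨(Classical.choose (key p.1.1 p.1.2 p.2.1 p.2.2),
      T (hgt p.1.1 : ℤ) '' p.1.2 ∩ B (Classical.choose (key p.1.1 p.1.2 p.2.1 p.2.2))),
     ⟨(himgmeas _ _ p.2.1).inter (hBmeas _), Set.inter_subset_right⟩⟩
  let ch : ℕ → P := fun t => F^[t] ⟨(j₀, B j₀), hBmeas j₀, subset_rfl⟩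
  let l : ℕ → Fin k := fun t => (ch t).1.1
  let A : ℕ → Set X := fun t => (ch t).1.2
  have hch : ∀ t, ch (t + 1) = F (ch t) := fun t => Function.iterate_succ_apply' F t _
  have hAm : ∀ t, MeasurableSet (A t) := fun t => (ch t).2.1
  have hAB : ∀ t, A t ⊆ B (l t) := fun t => (ch t).2.2
  have hA0 : A 0 = B j₀ := rfl
  have hAsucc : ∀ t, A (t + 1) =
      T (hgt (l t) : ℤ) '' A t ∩ B (l (t + 1)) := by
    intro t
    show (ch (t + 1)).1.2 = T (hgt (ch t).1.1 : ℤ) '' (ch t).1.2 ∩ B (ch (t + 1)).1.1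
    rw [hch]
  have hmeasstep : ∀ t, μ (A t) ≤ (k : ℝ≥0∞) * μ (A (t + 1)) := by
    intro t
    have hspec := Classical.choose_spec (key (l t) (A t) (hAm t) (hAB t))
    have he : A (t + 1) = T (hgt (l t) : ℤ) '' (A t) ∩
        B (Classical.choose (key (l t) (A t) (hAm t) (hAB t))) := by
      show (ch (t + 1)).1.2 = _
      rw [hch]
    rw [he]
    exact hspec
  -- measure lower bound along the chain
  have hmeas : ∀ t, μ (B j₀) ≤ (k : ℝ≥0∞) ^ t * μ (A t) := by
    intro t
    induction t with
    | zero => simp [hA0]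
    | succ t ih =>
        calc μ (B j₀) ≤ (k : ℝ≥0∞) ^ t * μ (A t) := ih
          _ ≤ (k : ℝ≥0∞) ^ t * ((k : ℝ≥0∞) * μ (A (t + 1))) :=
              mul_le_mul_right (hmeasstep t) _
          _ = (k : ℝ≥0∞) ^ (t + 1) * μ (A (t + 1)) := by ring
  -- subset relation along the chain
  have hsub : ∀ s t, s ≤ t →
      A t ⊆ T ((∑ u ∈ Finset.Ico s t, hgt (l u) : ℕ) : ℤ) '' A s := by
    intro s t hst
    induction t with
    | zero =>
        have hs0 : s = 0 := Nat.le_zero.mp hst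
        subst hs0
        simp only [Finset.Ico_self, Finset.sum_empty, Nat.cast_zero, hid]
        exact subset_rfl
    | succ t ih =>
        rcases Nat.lt_or_ge s (t + 1) with h | h
        · have hst' : s ≤ t := Nat.lt_succ_iff.mp h
          have h1 := ih hst'
          have h2 : A (t + 1) ⊆ T (hgt (l t) : ℤ) '' A t := by
            rw [hAsucc t]; exact Set.inter_subset_left
          have hcast : ((∑ u ∈ Finset.Ico s (t + 1), hgt (l u) : ℕ) : ℤ) =
              (hgt (l t) : ℤ) + ((∑ u ∈ Finset.Ico s t, hgt (l u) : ℕ) : ℤ) := by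
            rw [Finset.sum_Ico_succ_top hst']
            push_cast
            ring
          calc A (t + 1) ⊆ T (hgt (l t) : ℤ) '' A t := h2
            _ ⊆ T (hgt (l t) : ℤ) ''
                (T ((∑ u ∈ Finset.Ico s t, hgt (l u) : ℕ) : ℤ) '' A s) :=
              Set.image_mono h1
            _ = T ((∑ u ∈ Finset.Ico s (t + 1), hgt (l u) : ℕ) : ℤ) '' A s := by
              rw [hcomp, hcast]
        · have hs : s = t + 1 := le_antisymm hst h
          subst hs
          simp only [Finset.Ico_self, Finset.sum_empty, Nat.cast_zero, hid]
          exact subset_rfl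
  -- pigeonhole on tower indices
  have hcard : Fintype.card (Fin k) < Fintype.card (Fin (k + 1)) := by simp
  obtain ⟨a, b, hab, heq⟩ :=
    Fintype.exists_ne_map_eq_of_card_lt (fun t : Fin (k + 1) => l t) hcard
  obtain ⟨s, t, hst, htk, hlst⟩ : ∃ s t : ℕ, s < t ∧ t ≤ k ∧ l s = l t := by
    rcases lt_or_gt_of_ne hab with h | h
    · exact ⟨a, b, h, Nat.lt_succ_iff.mp b.isLt, heq⟩
    · exact ⟨b, a, h, Nat.lt_succ_iff.mp a.isLt, heq.symm⟩
  refine ⟨j₀, hj₀, l s, ∑ u ∈ Finset.Ico s t, hgt (l u), ?_, ?_, ?_⟩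
  · exact Finset.sum_pos (fun u _ => hpos _) (Finset.nonempty_Ico.mpr hst)
  · refine ⟨t - s, by omega, fun i => l (s + i), ?_⟩
    rw [Finset.sum_Ico_eq_sum_range]
    exact (Fin.sum_univ_eq_sum_range (fun i => hgt (l (s + i))) (t - s)).symm
  · -- measure bound
    have hAtsub : A t ⊆ T ((∑ u ∈ Finset.Ico s t, hgt (l u) : ℕ) : ℤ) '' B (l s) ∩ B (l s) := by
      refine Set.subset_inter ?_ ?_
      · exact (hsub s t hst.le).trans (Set.image_mono (hAB s))
      · rw [hlst]; exact hAB t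
    have h1 : μ (B j₀) ≤ (k : ℝ≥0∞) ^ k * μ (A t) := by
      refine (hmeas t).trans (mul_le_mul_left ?_ _)
      exact pow_le_pow_right₀ (by exact_mod_cast hk : (1:ℝ≥0∞) ≤ k) htk
    have hkk0 : ((k : ℝ≥0∞) ^ k) ≠ 0 := pow_ne_zero _ (Nat.cast_ne_zero.mpr (by omega))
    have hkktop : ((k : ℝ≥0∞) ^ k) ≠ ∞ := ENNReal.pow_ne_top (ENNReal.natCast_ne_top k)
    rw [ENNReal.div_le_iff_le_mul (Or.inl hkk0) (Or.inl hkktop)]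
    calc μ (B j₀) ≤ (k : ℝ≥0∞) ^ k * μ (A t) := h1
      _ = μ (A t) * (k : ℝ≥0∞) ^ k := mul_comm _ _
      _ ≤ μ (T ((∑ u ∈ Finset.Ico s t, hgt (l u) : ℕ) : ℤ) '' B (l s) ∩ B (l s)) *
            (k : ℝ≥0∞) ^ k := mul_le_mul_left (measure_mono hAtsub) _
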